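/- arXiv:1712.03825 — 2 statements merged into one kernel-verified Lean document; each statement's English description precedes it below -/
import Mathlib

section
/- Let $E_1, \dots, E_n$ be real numbers sorted so that $E_{k_1} \le \dots \le E_{k_n}$, let $\tau, \rho > 0$, and define $F(J) = \frac{1}{|J|}\sum_{k\in J} E_k - \tau(1 - e^{-\rho|J|})$ for nonempty $J \subseteq \{1,\dots,n\}$. Then $\min_{J \neq \emptyset} F(J) = \min_{1 \le j \le n} \left(\frac{1}{j}\sum_{i=1}^j E_{k_i} - \tau(1 - e^{-\rho j})\right)$; i.e., a global minimizer can always be chosen among the $n$ prefix sets $\{k_1,\dots,k_j\}$. -/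
open Finset Real

lemma strictMono_fin_le {j n : ℕ} (f : Fin j → Fin n) (hf : StrictMono f) :
    ∀ v (hv : v < j), v ≤ (f ⟨v, hv⟩ : ℕ) := by
  intro v
  induction v with
  | zero => intro _; exact Nat.zero_le _
  | succ m ih =>
    intro hv
    have hm : m < j := Nat.lt_of_succ_lt hv
    have h1 : f ⟨m, hm⟩ < f ⟨m + 1, hv⟩ := hf (by simp [Fin.lt_def])
    have h2 := ih hm
    have h3 := Fin.lt_def.mp h1
    omega

lemma filter_lt_eq_map {n j : ℕ} (hjn : j ≤ n) :
    Finset.univ.filter (fun i : Fin n => (i : ℕ) < j)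
      = (Finset.univ : Finset (Fin j)).map (Fin.castLEEmb hjn) := by
  ext x
  simp only [Finset.mem_filter, Finset.mem_univ, true_and, Finset.mem_map]
  constructor
  · intro hx
    exact ⟨⟨(x : ℕ), hx⟩, rfl⟩
  · rintro ⟨i, rfl⟩
    exact i.isLt

/-- Sum of the `S.card` smallest values of a monotone `g` bounds the sum over `S`. -/
lemma prefix_sum_le {n : ℕ} (g : Fin n → ℝ) (hg : Monotone g) (S : Finset (Fin n)) :
    ∑ i ∈ Finset.univ.filter (fun i : Fin n => (i : ℕ) < S.card), g i ≤ ∑ i ∈ S, g i := by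
  set j := S.card with hj
  have hjn : j ≤ n := by
    simpa using S.card_le_univ.trans_eq (by simp)
  have hsum : ∑ i ∈ S, g i = ∑ i : Fin j, g (S.orderEmbOfFin hj.symm i) := by
    rw [← Finset.sum_coe_sort S g]
    rw [← Equiv.sum_comp (S.orderIsoOfFin hj.symm).toEquiv (fun x : S => g x)]
    rfl
  have hfilt : ∑ i ∈ Finset.univ.filter (fun i : Fin n => (i : ℕ) < j), g i
      = ∑ i : Fin j, g (Fin.castLE hjn i) := by
    rw [filter_lt_eq_map hjn, Finset.sum_map]
    rfl
  rw [hsum, hfilt]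
  apply Finset.sum_le_sum
  intro i _
  apply hg
  have := strictMono_fin_le (S.orderEmbOfFin hj.symm)
    (S.orderEmbOfFin hj.symm).strictMono (i : ℕ) i.isLt
  simpa [Fin.le_def] using this

/-- A global minimizer of the IRIS `J`-subproblem energy over all nonempty
    subsets can always be chosen among the `n` prefix sets obtained by sorting. -/
theorem global_min_attained_on_prefixes (n : ℕ) (E : Fin n → ℝ)
    (k : Equiv.Perm (Fin n)) (hk : Monotone (fun i => E (k i)))
    (τ ρ : ℝ) (hτ : 0 < τ) (hρ : 0 < ρ)
    (F : Finset (Fin n) → ℝ)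
    (hF : ∀ J, F J = (J.card : ℝ)⁻¹ * ∑ i ∈ J, E i - τ * (1 - exp (-ρ * J.card)))
    (J : Finset (Fin n)) (hJ : J.Nonempty) :
    ∃ j, 1 ≤ j ∧ j ≤ n ∧
      F ((Finset.univ.filter (fun i : Fin n => (i : ℕ) < j)).image k) ≤ F J := by
  have hJn : J.card ≤ n := by simpa using J.card_le_univ.trans_eq (by simp)
  refine ⟨J.card, hJ.card_pos, hJn, ?_⟩
  set P := (Finset.univ.filter (fun i : Fin n => (i : ℕ) < J.card)).image k with hP
  set S : Finset (Fin n) := J.image k.symm with hS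
  have hScard : S.card = J.card := Finset.card_image_of_injective _ k.symm.injective
  have hSsum : ∑ i ∈ S, E (k i) = ∑ i ∈ J, E i := by
    rw [hS, Finset.sum_image (fun a _ b _ h => k.symm.injective h)]
    simp
  have hPcard : P.card = J.card := by
    rw [hP, Finset.card_image_of_injective _ k.injective, filter_lt_eq_map hJn]
    simp
  have hPsum : ∑ i ∈ P, E i
      = ∑ i ∈ Finset.univ.filter (fun i : Fin n => (i : ℕ) < J.card), E (k i) := by
    rw [hP, Finset.sum_image (fun a _ b _ h => k.injective h)]
  have key : ∑ i ∈ P, E i ≤ ∑ i ∈ J, E i := by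
    rw [hPsum, ← hSsum]
    have := prefix_sum_le (fun i => E (k i)) hk S
    rwa [hScard] at this
  rw [hF, hF, hPcard]
  have hc : (0:ℝ) < (J.card : ℝ) := by exact_mod_cast hJ.card_pos
  have := mul_le_mul_of_nonneg_left key (inv_nonneg.mpr hc.le)
  linarith
end

section
/- Under the setup of the previous statement (alternating minimization of $E_1(I,J)$ where the $I$-update is the exact average over $J$ and the $J$-update is an exact minimizer), the sequence of energies $E_1(I^t, J^t)$ is eventually constant; i.e., there exists $T$ such that $E_1(I^{t+1},J^{t+1}) = E_1(I^t,J^t)$ for all $t \ge T$. -/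
open Finset Real

open RealInnerProductSpace in
lemma IRIS_sum_sq_mean_le {ι F : Type*} [Fintype ι] [NormedAddCommGroup F]
    [InnerProductSpace ℝ F] (S : Finset ι) (hS : S.Nonempty) (f : ι → F) (x : F) :
    ∑ k ∈ S, ‖(S.card : ℝ)⁻¹ • ∑ j ∈ S, f j - f k‖ ^ 2 ≤ ∑ k ∈ S, ‖x - f k‖ ^ 2 := by
  set m : F := (S.card : ℝ)⁻¹ • ∑ j ∈ S, f j with hm
  have hcard : (S.card : ℝ) ≠ 0 := Nat.cast_ne_zero.mpr hS.card_pos.ne'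
  have hsum : ∑ k ∈ S, (m - f k) = 0 := by
    rw [Finset.sum_sub_distrib, Finset.sum_const, hm]
    rw [← Nat.cast_smul_eq_nsmul ℝ, smul_smul, mul_inv_cancel₀ hcard, one_smul, sub_self]
  have key : ∑ k ∈ S, ‖x - f k‖ ^ 2
      = (S.card : ℝ) * ‖x - m‖ ^ 2 + ∑ k ∈ S, ‖m - f k‖ ^ 2 := by
    have h1 : ∀ k ∈ S, ‖x - f k‖ ^ 2
        = ‖x - m‖ ^ 2 + 2 * ⟪x - m, m - f k⟫ + ‖m - f k‖ ^ 2 := by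
      intro k _
      rw [← norm_add_sq_real]
      congr 1
      abel
    rw [Finset.sum_congr rfl h1]
    rw [Finset.sum_add_distrib, Finset.sum_add_distrib, Finset.sum_const, ← Finset.mul_sum,
      ← inner_sum, hsum, inner_zero_right, nsmul_eq_mul]
    ring
  rw [key]
  have : 0 ≤ (S.card : ℝ) * ‖x - m‖ ^ 2 := by positivity
  linarith

/-- Along the alternating IRIS scheme, the energy sequence is eventually constant. -/
theorem IRIS_energy_eventually_constant (d n : ℕ) (Ik : Fin n → EuclideanSpace ℝ (Fin d))
    (Q : Fin n → ℝ) (hQ : ∀ i, 0 ≤ Q i)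
    (lam τ ρ : ℝ) (hlam : 0 < lam) (hτ : 0 < τ) (hρ : 0 < ρ)
    (E1 : EuclideanSpace ℝ (Fin d) → Finset (Fin n) → ℝ)
    (hE1 : ∀ I J, E1 I J = (J.card : ℝ)⁻¹ * ∑ k ∈ J, (‖I - Ik k‖ ^ 2 + lam * Q k)
      - τ * (1 - exp (-ρ * J.card)))
    (I : ℕ → EuclideanSpace ℝ (Fin d)) (J : ℕ → Finset (Fin n))
    (hJne : ∀ t, (J t).Nonempty)
    (hJmin : ∀ t, ∀ J' : Finset (Fin n), J'.Nonempty → E1 (I t) (J (t + 1)) ≤ E1 (I t) J')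
    (hIavg : ∀ t, I (t + 1) = ((J (t + 1)).card : ℝ)⁻¹ • ∑ k ∈ J (t + 1), Ik k) :
    ∃ T : ℕ, ∀ t, T ≤ t → E1 (I (t + 1)) (J (t + 1)) = E1 (I t) (J t) := by
  classical
  set avg : Finset (Fin n) → EuclideanSpace ℝ (Fin d) :=
    fun S => (S.card : ℝ)⁻¹ • ∑ k ∈ S, Ik k with havg
  -- optimality of the average
  have hIopt : ∀ (S : Finset (Fin n)), S.Nonempty → ∀ x, E1 (avg S) S ≤ E1 x S := by
    intro S hS x
    rw [hE1, hE1]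
    apply sub_le_sub_right
    apply mul_le_mul_of_nonneg_left _ (by positivity)
    rw [Finset.sum_add_distrib, Finset.sum_add_distrib]
    apply add_le_add_left
    exact IRIS_sum_sq_mean_le S hS Ik x
  set e : ℕ → ℝ := fun t => E1 (I t) (J t) with he
  have hstep : ∀ t, e (t + 1) ≤ e t := by
    intro t
    have h1 : e (t + 1) = E1 (avg (J (t + 1))) (J (t + 1)) := by
      simp only [he, hIavg t, havg]
    calc e (t + 1) = E1 (avg (J (t + 1))) (J (t + 1)) := h1
      _ ≤ E1 (I t) (J (t + 1)) := hIopt _ (hJne (t + 1)) _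
      _ ≤ E1 (I t) (J t) := hJmin t (J t) (hJne t)
  have hanti : Antitone e := antitone_nat_of_succ_le hstep
  -- finitely many values
  set g : Finset (Fin n) → ℝ := fun S => E1 (avg S) S with hg
  have heg : ∀ t, e (t + 1) = g (J (t + 1)) := by
    intro t; simp only [he, hg, hIavg t, havg]
  set V : Finset ℝ := Finset.univ.image g with hV
  set W : Finset ℝ := V.filter (fun v => ∃ t, e (t + 1) = v) with hW
  have hWne : W.Nonempty := by
    refine ⟨e 1, ?_⟩
    rw [hW, Finset.mem_filter]
    exact ⟨by rw [hV]; exact Finset.mem_image.mpr ⟨J 1, Finset.mem_univ _, (heg 0).symm⟩, 0, rfl⟩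
  obtain ⟨t₀, ht₀⟩ : ∃ t₀, e (t₀ + 1) = W.min' hWne :=
    (Finset.mem_filter.mp (W.min'_mem hWne)).2
  have hmin : ∀ t, W.min' hWne ≤ e (t + 1) := by
    intro t
    apply Finset.min'_le
    rw [hW, Finset.mem_filter]
    exact ⟨by rw [hV]; exact Finset.mem_image.mpr ⟨J (t + 1), Finset.mem_univ _, (heg t).symm⟩,
      t, rfl⟩
  refine ⟨t₀ + 1, fun t ht => ?_⟩
  obtain ⟨s, rfl⟩ : ∃ s, t = s + 1 := ⟨t - 1, by omega⟩
  have h1 : e (s + 1 + 1) ≤ e (t₀ + 1) := hanti (by omega)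
  have h2 : W.min' hWne ≤ e (s + 1 + 1) := hmin (s + 1)
  have h3 : e (s + 1) ≤ e (t₀ + 1) := hanti (by omega)
  have h4 : W.min' hWne ≤ e (s + 1) := hmin s
  rw [ht₀] at h1 h3
  show e (s + 1 + 1) = e (s + 1)
  linarith
end
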